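/- Let β = 2, t > 1, and let y = m(y)·2^{e(y)} ∈ D with 2^{t-1} ≤ |m(y)| < 2^t and e(y) > E_min. For any real w̃ ∈ [y − 2^{e(y)}, y + 2^{e(y)}], the difference y − fl(w̃) can only take the values 0, ±2^{e(y)-1}, or ±2^{e(y)}. -/
import Mathlib


/-- Dekker's floating point number system as a set of reals. -/
def Dekker (β : ℤ) (t : ℕ) (Emin Emax : ℤ) : Set ℝ :=
  {x | ∃ m e : ℤ, |m| < β ^ t ∧ Emin ≤ e ∧ e ≤ Emax ∧ x = (m : ℝ) * (β : ℝ) ^ e}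

/-- for normal y and w̃ within one ulp-scale interval around y (t > 1),
y − fl(w̃) takes only the values 0, ±2^{e(y)-1}, ±2^{e(y)}. -/
theorem dekker_full_interval_difference
    (t : ℕ) (Emin Emax : ℤ) (ht : 1 < t)
    (fl : ℝ → ℝ)
    (hmem : ∀ x, fl x ∈ Dekker 2 t Emin Emax)
    (hnear : ∀ x, ∀ a ∈ Dekker 2 t Emin Emax, |fl x - x| ≤ |a - x|)
    (my ey : ℤ) (hmy1 : 2 ^ (t - 1) ≤ |my|) (hmy2 : |my| < 2 ^ t)
    (hey1 : Emin < ey) (hey2 : ey ≤ Emax)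
    (y : ℝ) (hy : y = (my : ℝ) * (2 : ℝ) ^ ey)
    (wt : ℝ) (hw1 : y - (2 : ℝ) ^ ey ≤ wt) (hw2 : wt ≤ y + (2 : ℝ) ^ ey) :
    y - fl wt ∈
      ({0, (2 : ℝ) ^ (ey - 1), -(2 : ℝ) ^ (ey - 1), (2 : ℝ) ^ ey, -(2 : ℝ) ^ ey} : Set ℝ) := by
  obtain ⟨mf, ef, hmf, hef1, hef2, hFeq⟩ := hmem wt
  have h2ne : (2:ℝ) ≠ 0 := two_ne_zero
  have hEpos : (0:ℝ) < (2:ℝ) ^ ey := zpow_pos (by norm_num) ey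
  have hE1pos : (0:ℝ) < (2:ℝ) ^ (ey - 1) := zpow_pos (by norm_num) _
  have h2e : (2:ℝ) ^ ey = 2 * (2:ℝ) ^ (ey - 1) := by
    rw [show ey = (ey - 1) + 1 by ring, zpow_add_one₀ h2ne]; ring_nf
  have hy_mem : y ∈ Dekker 2 t Emin Emax :=
    ⟨my, ey, hmy2, hey1.le, hey2, by push_cast [hy]; ring⟩
  -- key bounding device
  have key : ∀ a ∈ Dekker 2 t Emin Emax,
      |a - wt| ≤ (2:ℝ)^ey - |y - wt| → |y - fl wt| ≤ (2:ℝ)^ey := by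
    intro a ha hA
    have h1 := hnear wt a ha
    have h0 : |y - fl wt| ≤ |y - wt| + |wt - fl wt| := abs_sub_le y wt (fl wt)
    rw [abs_sub_comm wt (fl wt)] at h0
    linarith
  -- Step 1 : |y - fl wt| ≤ 2^ey
  have hstep1 : |y - fl wt| ≤ (2:ℝ)^ey := by
    rcases le_or_gt (|y - wt|) ((2:ℝ)^(ey-1)) with hnearby | hfar
    · exact key y hy_mem (by linarith)
    rcases le_or_gt wt y with hwy | hwy
    · -- wt < y - 2^(ey-1)
      have hyw : |y - wt| = y - wt := abs_of_nonneg (by linarith)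
      by_cases hbot : my = -(2^t - 1)
      · by_cases hEtop : ey = Emax
        · -- all of D is ≥ y ; then fl wt = y
          have hub : ∀ a ∈ Dekker 2 t Emin Emax, y ≤ a := by
            rintro a ⟨m, e, hm, he1, he2, rfl⟩
            have hm' : (|m|:ℝ) ≤ (2:ℝ)^(t:ℤ) - 1 := by
              have : |m| ≤ 2^t - 1 := by omega
              calc (|m|:ℝ) ≤ ((2^t - 1 : ℤ):ℝ) := by exact_mod_cast this
                _ = (2:ℝ)^(t:ℤ) - 1 := by push_cast [zpow_natCast]; norm_num
            have hpe : (2:ℝ)^e ≤ (2:ℝ)^Emax :=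
              zpow_le_zpow_right₀ (by norm_num) he2
            have hpepos : (0:ℝ) < (2:ℝ)^e := zpow_pos (by norm_num) e
            have h1 : -((2:ℝ)^(t:ℤ) - 1) * (2:ℝ)^Emax ≤ (m:ℝ) * ((2:ℤ):ℝ)^e := by
              have hml : -((2:ℝ)^(t:ℤ) - 1) ≤ (m:ℝ) := by
                have := neg_abs_le (m:ℝ)
                push_cast at this ⊢
                nlinarith
              have h2t1 : (0:ℝ) ≤ (2:ℝ)^(t:ℤ) - 1 := by
                have : (1:ℝ) ≤ (2:ℝ)^(t:ℤ) := one_le_zpow₀ (by norm_num) (by positivity)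
                linarith
              push_cast
              nlinarith [neg_abs_le (m:ℝ), abs_nonneg (m:ℝ)]
            have hyeq : y = -((2:ℝ)^(t:ℤ) - 1) * (2:ℝ)^Emax := by
              rw [hy, hbot, hEtop]; push_cast [zpow_natCast]; ring
            rw [hyeq]; exact h1
          have h1 := hnear wt y hy_mem
          have h2 := hub (fl wt) (hmem wt)
          have h3 : |fl wt - wt| = fl wt - wt := abs_of_nonneg (by linarith)
          have h4 : fl wt ≤ y := by rw [h3, hyw] at h1; linarith
          have : fl wt = y := le_antisymm h4 h2
          rw [this]; simp; positivity
        · -- use a = y - 2^ey = -2^(t-1) * 2^(ey+1)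
          have hmemA : y - (2:ℝ)^ey ∈ Dekker 2 t Emin Emax := by
            refine ⟨-(2^(t-1)), ey + 1, ?_, by omega, by omega, ?_⟩
            · have : (2:ℤ)^(t-1) < 2^t := by
                apply pow_lt_pow_right₀ (by norm_num) (by omega)
              simpa using this
            · rw [hy, hbot]
              have htt : t - 1 + 1 = t := by omega
              push_cast
              rw [zpow_add_one₀ h2ne, ← htt]
              push_cast [pow_succ]
              ring
          refine key _ hmemA ?_
          have : |y - (2:ℝ)^ey - wt| = (2:ℝ)^ey - (y - wt) := by
            rw [abs_of_nonpos (by linarith)]; ring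
          rw [this, hyw]
      · -- use a = y - 2^ey = (my - 1) * 2^ey
        have hmemA : y - (2:ℝ)^ey ∈ Dekker 2 t Emin Emax := by
          refine ⟨my - 1, ey, ?_, hey1.le, hey2, ?_⟩
          · have h2t : (0:ℤ) < 2^t := by positivity
            rw [abs_lt] at hmy2 ⊢; omega
          · rw [hy]; push_cast; ring
        refine key _ hmemA ?_
        have : |y - (2:ℝ)^ey - wt| = (2:ℝ)^ey - (y - wt) := by
          rw [abs_of_nonpos (by linarith)]; ring
        rw [this, hyw]
    · -- wt > y + 2^(ey-1)
      have hyw : |y - wt| = wt - y := by rw [abs_of_nonpos (by linarith)]; ring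
      by_cases htop : my = 2^t - 1
      · by_cases hEtop : ey = Emax
        · -- all of D is ≤ y ; then fl wt = y
          have hub : ∀ a ∈ Dekker 2 t Emin Emax, a ≤ y := by
            rintro a ⟨m, e, hm, he1, he2, rfl⟩
            have hm' : (m:ℝ) ≤ (2:ℝ)^(t:ℤ) - 1 := by
              have : m ≤ 2^t - 1 := by
                have := (abs_lt.mp hm).2; omega
              calc (m:ℝ) ≤ ((2^t - 1 : ℤ):ℝ) := by exact_mod_cast this
                _ = (2:ℝ)^(t:ℤ) - 1 := by push_cast [zpow_natCast]; norm_num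
            have hpe : (2:ℝ)^e ≤ (2:ℝ)^Emax :=
              zpow_le_zpow_right₀ (by norm_num) he2
            have hpepos : (0:ℝ) < (2:ℝ)^e := zpow_pos (by norm_num) e
            have h2t1 : (0:ℝ) ≤ (2:ℝ)^(t:ℤ) - 1 := by
              have : (1:ℝ) ≤ (2:ℝ)^(t:ℤ) := one_le_zpow₀ (by norm_num) (by positivity)
              linarith
            have hyeq : y = ((2:ℝ)^(t:ℤ) - 1) * (2:ℝ)^Emax := by
              rw [hy, htop, hEtop]; push_cast [zpow_natCast]; ring
            rw [hyeq]
            push_cast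
            nlinarith
          have h1 := hnear wt y hy_mem
          have h2 := hub (fl wt) (hmem wt)
          have h3 : |fl wt - wt| = wt - fl wt := by
            rw [abs_of_nonpos (by linarith)]; ring
          have h4 : y ≤ fl wt := by rw [h3, hyw] at h1; linarith
          have : fl wt = y := le_antisymm h2 h4
          rw [this]; simp; positivity
        · -- use a = y + 2^ey = 2^(t-1) * 2^(ey+1)
          have hmemA : y + (2:ℝ)^ey ∈ Dekker 2 t Emin Emax := by
            refine ⟨2^(t-1), ey + 1, ?_, by omega, by omega, ?_⟩
            · have : (2:ℤ)^(t-1) < 2^t := by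
                apply pow_lt_pow_right₀ (by norm_num) (by omega)
              simpa using this
            · rw [hy, htop]
              have htt : t - 1 + 1 = t := by omega
              push_cast
              rw [zpow_add_one₀ h2ne, ← htt]
              push_cast [pow_succ]
              ring
          refine key _ hmemA ?_
          have : |y + (2:ℝ)^ey - wt| = (2:ℝ)^ey - (wt - y) := by
            rw [abs_of_nonneg (by linarith)]; ring
          rw [this, hyw]
      · -- use a = y + 2^ey = (my + 1) * 2^ey
        have hmemA : y + (2:ℝ)^ey ∈ Dekker 2 t Emin Emax := by
          refine ⟨my + 1, ey, ?_, hey1.le, hey2, ?_⟩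
          · have h2t : (0:ℤ) < 2^t := by positivity
            rw [abs_lt] at hmy2 ⊢; omega
          · rw [hy]; push_cast; ring
        refine key _ hmemA ?_
        have : |y + (2:ℝ)^ey - wt| = (2:ℝ)^ey - (wt - y) := by
          rw [abs_of_nonneg (by linarith)]; ring
        rw [this, hyw]
  -- Step 2 : ef ≥ ey - 1
  have hmyR : (2:ℝ)^((t:ℤ)-1) ≤ |(my:ℝ)| := by
    have h1 : ((2:ℤ)^(t-1) : ℝ) ≤ (|my| : ℝ) := by exact_mod_cast hmy1
    have h2 : ((2:ℤ)^(t-1) : ℝ) = (2:ℝ)^((t:ℤ)-1) := by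
      push_cast
      rw [← zpow_natCast (2:ℝ) (t-1)]
      congr 1
      omega
    rw [← h2]; rw [← Int.cast_abs] at h1 ⊢; exact h1
  have hyabs : |y| = |(my:ℝ)| * (2:ℝ)^ey := by
    rw [hy, abs_mul, abs_of_pos hEpos]
  have hFlb : (2:ℝ)^((t:ℤ) + ey - 2) ≤ |fl wt| := by
    have h1 : |y| - |y - fl wt| ≤ |fl wt| := by
      have := abs_sub_abs_le_abs_sub y (fl wt)
      linarith
    have h2 : ((2:ℝ)^((t:ℤ)-1) - 1) * (2:ℝ)^ey ≤ |fl wt| := by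
      rw [hyabs] at h1
      nlinarith
    have h3 : (2:ℝ)^((t:ℤ)-2) ≤ (2:ℝ)^((t:ℤ)-1) - 1 := by
      have e1 : (2:ℝ)^((t:ℤ)-1) = 2 * (2:ℝ)^((t:ℤ)-2) := by
        rw [show (t:ℤ)-1 = ((t:ℤ)-2) + 1 by ring, zpow_add_one₀ h2ne]; ring_nf
      have e2 : (1:ℝ) ≤ (2:ℝ)^((t:ℤ)-2) := one_le_zpow₀ (by norm_num) (by omega)
      linarith
    have h4 : (2:ℝ)^((t:ℤ) + ey - 2) = (2:ℝ)^((t:ℤ)-2) * (2:ℝ)^ey := by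
      rw [← zpow_add₀ h2ne]; congr 1; ring
    rw [h4]
    nlinarith
  have hefge : ey - 1 ≤ ef := by
    by_contra hcon
    push_neg at hcon
    have hub : |fl wt| < (2:ℝ)^((t:ℤ) + ef) := by
      rw [hFeq, abs_mul]
      have h1 : |(mf:ℝ)| < (2:ℝ)^(t:ℤ) := by
        rw [← Int.cast_abs]
        calc ((|mf|:ℤ):ℝ) < (((2:ℤ)^t:ℤ):ℝ) := by exact_mod_cast hmf
          _ = (2:ℝ)^(t:ℤ) := by rw [zpow_natCast]; push_cast; ring
      have h2 : |((2:ℤ):ℝ)^ef| = (2:ℝ)^ef := by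
        push_cast
        exact abs_of_pos (zpow_pos (by norm_num) ef)
      push_cast at h2 ⊢
      rw [h2]
      calc |(mf:ℝ)| * (2:ℝ)^ef < (2:ℝ)^(t:ℤ) * (2:ℝ)^ef := by
            have := zpow_pos (show (0:ℝ) < 2 by norm_num) ef
            nlinarith [abs_nonneg (mf:ℝ)]
        _ = (2:ℝ)^((t:ℤ) + ef) := by rw [← zpow_add₀ h2ne]
    have hlt : (2:ℝ)^((t:ℤ) + ef) ≤ (2:ℝ)^((t:ℤ) + ey - 2) := by
      apply zpow_le_zpow_right₀ (by norm_num)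
      omega
    linarith
  -- Step 3
  have hdnn : (0:ℤ) ≤ ef - (ey - 1) := by omega
  obtain ⟨dd, hefd⟩ : ∃ dd : ℕ, ef = (ey - 1) + dd :=
    ⟨(ef - (ey - 1)).toNat, by omega⟩
  have hF2 : fl wt = ((mf * 2^dd : ℤ):ℝ) * (2:ℝ)^(ey - 1) := by
    rw [hFeq, hefd, zpow_add₀ (by norm_num : ((2:ℤ):ℝ) ≠ 0)]
    push_cast [zpow_natCast]
    ring
  have hy2 : y = ((2 * my : ℤ):ℝ) * (2:ℝ)^(ey - 1) := by
    rw [hy, h2e]; push_cast; ring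
  obtain ⟨k, hdiff, hkb⟩ : ∃ k : ℤ, y - fl wt = (k:ℝ) * (2:ℝ)^(ey-1) ∧ |k| ≤ 2 := by
    refine ⟨2 * my - mf * 2^dd, ?_, ?_⟩
    · rw [hy2, hF2]; push_cast; ring
    · by_contra hcon
      push_neg at hcon
      have h3 : (3:ℤ) ≤ |2 * my - mf * 2^dd| := hcon
      have h3' : (3:ℝ) ≤ |((2 * my - mf * 2^dd : ℤ):ℝ)| := by
        rw [← Int.cast_abs]; exact_mod_cast h3
      have habs : |y - fl wt| = |((2 * my - mf * 2^dd : ℤ):ℝ)| * (2:ℝ)^(ey-1) := by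
        rw [hy2, hF2, ← sub_mul, ← Int.cast_sub, abs_mul, abs_of_pos hE1pos]
      have h5 : 3 * (2:ℝ)^(ey-1) ≤ |((2 * my - mf * 2^dd : ℤ):ℝ)| * (2:ℝ)^(ey-1) :=
        mul_le_mul_of_nonneg_right h3' hE1pos.le
      rw [habs, h2e] at hstep1
      linarith
  have hk5 : k = -2 ∨ k = -1 ∨ k = 0 ∨ k = 1 ∨ k = 2 := by
    have := abs_le.mp hkb; omega
  simp only [Set.mem_insert_iff, Set.mem_singleton_iff]
  rcases hk5 with h | h | h | h | h <;> rw [hdiff, h]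
  · right; right; right; right; rw [h2e]; push_cast; ring
  · right; right; left; push_cast; ring
  · left; push_cast; ring
  · right; left; push_cast; ring
  · right; right; right; left; rw [h2e]; push_cast; ring
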